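/- Let A be a contraction on ℂⁿ with rank(1 − A*A) = 1, say 1 − A*A = ρ²⟨x,·⟩x for a unit vector x and ρ ∈ (0,1]. Write A = UB with U unitary and B as in the polar-type decomposition with B = 1 on x^⊥. Then x is a cyclic vector for U if and only if A has no eigenvalue of modulus 1. -/

import Mathlib

open InnerProductSpace

/-- For a completely non-unitary style decomposition `A = U∘B` of a contraction `A` on `ℂⁿ`
with defect operator `1 − A*A = ρ²⟨x,·⟩x` (`x` a unit vector, `ρ ∈ (0,1]`), where `U` is
unitary and `B` is the identity on `x^⊥` with `Bx = a·x`, `|a|² + ρ² = 1`:  the vector `x`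
is cyclic for `U` if and only if `A` has no eigenvalue of modulus `1`. -/
theorem cyclic_iff_no_unimodular_eigenvalue
    (n : ℕ)
    (A U B : EuclideanSpace ℂ (Fin n) →ₗ[ℂ] EuclideanSpace ℂ (Fin n))
    (x : EuclideanSpace ℂ (Fin n)) (hx : ‖x‖ = 1)
    (ρ : ℝ) (hρ0 : 0 < ρ) (hρ1 : ρ ≤ 1)
    (a : ℂ) (ha : ‖a‖ ^ 2 + ρ ^ 2 = 1)
    (hcontr : ∀ v, ‖A v‖ ≤ ‖v‖)
    (hdefect : ∀ v, v - (LinearMap.adjoint A) (A v)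
        = (((ρ : ℂ)) ^ 2 * (inner ℂ x v : ℂ)) • x)
    (hUiso : ∀ v w, (inner ℂ (U v) (U w) : ℂ) = inner ℂ v w)
    (hUsurj : Function.Surjective U)
    (hB : ∀ v, B v = v + ((a - 1) * (inner ℂ x v : ℂ)) • x)
    (hAUB : A = U ∘ₗ B) :
    Submodule.span ℂ (Set.range fun k : ℕ => (U ^ k) x) = ⊤ ↔
      ∀ (c : ℂ) (v : EuclideanSpace ℂ (Fin n)), ‖c‖ = 1 → A v = c • v → v = 0 := by
  classical
  set S : Set (EuclideanSpace ℂ (Fin n)) := Set.range fun k : ℕ => (U ^ k) x with hSdef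
  -- U preserves norms
  have hUnorm : ∀ v, ‖U v‖ = ‖v‖ := by
    intro v
    have h := hUiso v v
    rw [inner_self_eq_norm_sq_to_K, inner_self_eq_norm_sq_to_K] at h
    have h2 : (‖U v‖ : ℝ) ^ 2 = (‖v‖ : ℝ) ^ 2 := by exact_mod_cast h
    nlinarith [norm_nonneg (U v), norm_nonneg v]
  have hUinj : Function.Injective U := by
    intro u w huw
    have : ‖u - w‖ = 0 := by
      rw [← hUnorm, map_sub, huw, sub_self, norm_zero]
    simpa [sub_eq_zero] using norm_eq_zero.mp this
  -- key computation: eigenvector with unimodular eigenvalue is ⊥ x and is an eigenvector of U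
  have key : ∀ (c : ℂ) (v : EuclideanSpace ℂ (Fin n)), ‖c‖ = 1 → A v = c • v →
      (inner ℂ x v : ℂ) = 0 ∧ U v = c • v := by
    intro c v hc hAv
    have hd := hdefect v
    have hinner : (inner ℂ v (v - (LinearMap.adjoint A) (A v)) : ℂ)
        = inner ℂ v ((((ρ : ℂ)) ^ 2 * (inner ℂ x v : ℂ)) • x) := by rw [hd]
    have hL : (inner ℂ v (v - (LinearMap.adjoint A) (A v)) : ℂ) = 0 := by
      rw [inner_sub_right, LinearMap.adjoint_inner_right, hAv]
      rw [inner_self_eq_norm_sq_to_K, inner_smul_left, inner_smul_right,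
        inner_self_eq_norm_sq_to_K]
      have : (starRingEnd ℂ) c * c = 1 := by
        rw [RCLike.conj_mul, hc]; norm_num
      rw [← mul_assoc, this, one_mul, sub_self]
    have hR : (inner ℂ v ((((ρ : ℂ)) ^ 2 * (inner ℂ x v : ℂ)) • x) : ℂ)
        = (ρ : ℂ) ^ 2 * ((inner ℂ x v : ℂ) * (starRingEnd ℂ) (inner ℂ x v : ℂ)) := by
      rw [inner_smul_right, ← inner_conj_symm v x]
      ring
    have hxv : (inner ℂ x v : ℂ) = 0 := by
      have h0 : (ρ : ℂ) ^ 2 * ((inner ℂ x v : ℂ) * (starRingEnd ℂ) (inner ℂ x v : ℂ)) = 0 := by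
        rw [← hR, ← hinner, hL]
      have hρne : ((ρ : ℂ)) ^ 2 ≠ 0 := by
        have : (ρ : ℂ) ≠ 0 := by exact_mod_cast ne_of_gt hρ0
        exact pow_ne_zero 2 this
      have := (mul_eq_zero.mp h0).resolve_left hρne
      rcases mul_eq_zero.mp this with h | h
      · exact h
      · exact star_eq_zero.mp h
    refine ⟨hxv, ?_⟩
    have hBv : B v = v := by rw [hB v, hxv]; simp
    have : A v = U v := by rw [hAUB, LinearMap.comp_apply, hBv]
    rw [← this, hAv]
  constructor
  · -- cyclic → no unimodular eigenvalue
    intro hspan c v hc hAv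
    obtain ⟨hxv, hUv⟩ := key c v hc hAv
    have hc0 : c ≠ 0 := by
      intro h; rw [h, norm_zero] at hc; norm_num at hc
    have horth : ∀ k : ℕ, (inner ℂ ((U ^ k) x) v : ℂ) = 0 := by
      intro k
      induction k with
      | zero => simpa using hxv
      | succ k ih =>
        have h1 : (U ^ (k + 1)) x = U ((U ^ k) x) := by
          rw [pow_succ']; rfl
        have h2 : U (c⁻¹ • v) = v := by
          rw [map_smul, hUv, smul_smul, inv_mul_cancel₀ hc0, one_smul]
        calc (inner ℂ ((U ^ (k + 1)) x) v : ℂ)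
            = inner ℂ (U ((U ^ k) x)) (U (c⁻¹ • v)) := by rw [h1, h2]
          _ = inner ℂ ((U ^ k) x) (c⁻¹ • v) := hUiso _ _
          _ = c⁻¹ * inner ℂ ((U ^ k) x) v := inner_smul_right _ _ _
          _ = 0 := by rw [ih, mul_zero]
    have hle : Submodule.span ℂ S ≤ (ℂ ∙ v)ᗮ := by
      rw [Submodule.span_le]
      rintro _ ⟨k, rfl⟩
      simp only [SetLike.mem_coe]
      rw [Submodule.mem_orthogonal_singleton_iff_inner_right]
      rw [← inner_conj_symm, horth k, map_zero]
    rw [hspan] at hle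
    have hv : v ∈ (ℂ ∙ v)ᗮ := hle Submodule.mem_top
    have : (inner ℂ v v : ℂ) = 0 :=
      hv v (Submodule.mem_span_singleton_self v)
    exact inner_self_eq_zero.mp this
  · -- no unimodular eigenvalue → cyclic
    intro h
    by_contra hne
    set M : Submodule ℂ (EuclideanSpace ℂ (Fin n)) := Submodule.span ℂ S with hM
    have hxM : x ∈ M := Submodule.subset_span ⟨0, by simp⟩
    -- U maps M onto M
    have hle : Submodule.map U M ≤ M := by
      rw [hM, Submodule.map_span]
      apply Submodule.span_le.mpr
      rintro _ ⟨_, ⟨k, rfl⟩, rfl⟩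
      apply Submodule.subset_span
      exact ⟨k + 1, by show (U ^ (k + 1)) x = U ((U ^ k) x); rw [pow_succ']; rfl⟩
    have hmapU : Submodule.map U M = M := by
      let e : EuclideanSpace ℂ (Fin n) ≃ₗ[ℂ] EuclideanSpace ℂ (Fin n) :=
        LinearEquiv.ofBijective U ⟨hUinj, hUsurj⟩
      have hfr : Module.finrank ℂ (Submodule.map U M) = Module.finrank ℂ M := by
        have : Submodule.map U M = Submodule.map (e : EuclideanSpace ℂ (Fin n) →ₗ[ℂ]
            EuclideanSpace ℂ (Fin n)) M := rfl
        rw [this, LinearEquiv.finrank_map_eq]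
      exact Submodule.eq_of_le_of_finrank_le hle (le_of_eq hfr.symm)
    -- Mᗮ is U-invariant
    have hinv : ∀ v ∈ Mᗮ, U v ∈ Mᗮ := by
      intro v hv
      rw [Submodule.mem_orthogonal]
      intro w hw
      rw [← hmapU] at hw
      obtain ⟨u, hu, rfl⟩ := Submodule.mem_map.mp hw
      rw [hUiso]
      exact hv u hu
    have hMbot : Mᗮ ≠ ⊥ := fun hbot => hne (Submodule.orthogonal_eq_bot_iff.mp hbot)
    haveI : Nontrivial Mᗮ := Submodule.nontrivial_iff_ne_bot.mpr hMbot
    let T : Mᗮ →ₗ[ℂ] Mᗮ := LinearMap.restrict U hinv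
    obtain ⟨c, hc⟩ := Module.End.exists_eigenvalue T
    obtain ⟨v0, hv0⟩ := hc.exists_hasEigenvector
    have hv0ne : (v0 : EuclideanSpace ℂ (Fin n)) ≠ 0 := by
      simpa [Submodule.coe_eq_zero] using hv0.2
    have hUv : U (v0 : EuclideanSpace ℂ (Fin n)) = c • (v0 : EuclideanSpace ℂ (Fin n)) := by
      have := congrArg (Subtype.val) hv0.apply_eq_smul
      simpa [T, LinearMap.restrict_coe_apply] using this
    have hcnorm : ‖c‖ = 1 := by
      have hvnorm : ‖(v0 : EuclideanSpace ℂ (Fin n))‖ ≠ 0 := norm_ne_zero_iff.mpr hv0ne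
      have h1 : ‖c‖ * ‖(v0 : EuclideanSpace ℂ (Fin n))‖
          = 1 * ‖(v0 : EuclideanSpace ℂ (Fin n))‖ := by
        rw [one_mul, ← norm_smul, ← hUv, hUnorm]
      exact mul_right_cancel₀ hvnorm h1
    have hxv : (inner ℂ x (v0 : EuclideanSpace ℂ (Fin n)) : ℂ) = 0 := v0.2 x hxM
    have hBv : B (v0 : EuclideanSpace ℂ (Fin n)) = v0 := by rw [hB, hxv]; simp
    have hAv : A (v0 : EuclideanSpace ℂ (Fin n)) = c • (v0 : EuclideanSpace ℂ (Fin n)) := by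
      rw [hAUB, LinearMap.comp_apply, hBv, hUv]
    exact hv0ne (h c _ hcnorm hAv)
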